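/- Consider the Banach–Mazur game BM(X) on a topological space X: Bob first chooses a nonempty open set U_0 ⊆ X, then Alice chooses a nonempty open V_0 ⊆ U_0, and at stage n Bob chooses nonempty open U_n ⊆ V_{n-1} and Alice chooses nonempty open V_n ⊆ U_n; Bob wins if the intersection of all V_n is nonempty, otherwise Alice wins. If X is meagre (X is a countable union of nowhere dense sets), then Alice has a winning strategy in BM(X). -/

import Mathlib

lemma stmt_8_aux {X : Type*} [TopologicalSpace X] {E U : Set X}
    (hE : IsNowhereDense E) (hU : IsOpen U) (hne : U.Nonempty) :
    IsOpen (U \ closure E) ∧ (U \ closure E).Nonempty ∧ U \ closure E ⊆ U := by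
  refine ⟨hU.sdiff isClosed_closure, ?_, Set.diff_subset⟩
  rw [Set.nonempty_iff_ne_empty]
  intro h
  have : U ⊆ closure E := by
    intro x hx
    by_contra hx'
    exact absurd h (Set.nonempty_iff_ne_empty.mp ⟨x, hx, hx'⟩)
  have : U ⊆ interior (closure E) := interior_maximal this hU
  rw [hE] at this
  exact absurd (this hne.choose_spec) (Set.notMem_empty _)

/-- Alice has a winning strategy in the Banach–Mazur game `BM(X)` if `X` is meagre.
A strategy for Alice is a function `σ` from finite sequences of Bob's moves to Alice's
response; it must respond to any legal position (last Bob move nonempty open) with a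
nonempty open subset of that move, and every play following it has empty intersection. -/
theorem stmt_8 {X : Type*} [TopologicalSpace X]
    (E : ℕ → Set X) (hE : ∀ n, IsNowhereDense (E n)) (hcover : (⋃ n, E n) = Set.univ) :
    ∃ σ : List (Set X) → Set X,
      (∀ (l : List (Set X)) (U : Set X), l.getLast? = some U → IsOpen U → U.Nonempty →
        IsOpen (σ l) ∧ (σ l).Nonempty ∧ σ l ⊆ U) ∧
      ∀ U : ℕ → Set X, IsOpen (U 0) → (U 0).Nonempty →
        (∀ n, IsOpen (U (n + 1)) ∧ (U (n + 1)).Nonempty ∧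
          U (n + 1) ⊆ σ (List.ofFn fun i : Fin (n + 1) => U i.1)) →
        (⋂ n, σ (List.ofFn fun i : Fin (n + 1) => U i.1)) = ∅ := by
  refine ⟨fun l => l.getLastD ∅ \ closure (E (l.length - 1)), ?_, ?_⟩
  · intro l U hl hU hne
    have : l.getLastD ∅ = U := by
      rw [List.getLastD_eq_getLast?, hl]; rfl
    dsimp only
    rw [this]
    exact stmt_8_aux (hE _) hU hne
  · intro U _ _ _
    ext x
    simp only [Set.mem_iInter, Set.mem_empty_iff_false, iff_false]
    intro h
    have hx : x ∈ ⋃ n, E n := hcover ▸ Set.mem_univ x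
    obtain ⟨m, hm⟩ := Set.mem_iUnion.mp hx
    have h2 := h m
    rw [List.length_ofFn] at h2
    have hlast : (List.ofFn fun i : Fin (m + 1) => U i.1).getLastD ∅ = U m := by
      rw [List.getLastD_eq_getLast?, List.getLast?_eq_getLast (by simp),
        List.getLast_ofFn_succ]
      rfl
    rw [hlast] at h2
    exact h2.2 (subset_closure hm)
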